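/- Let G be a connected graph, r a vertex of G, and S a cluster with respect to r (a maximal set of vertices all at distance k from r, for some k ≥ 1, that lie in the same connected component of G minus the ball of radius k−1 around r). If the parent set of S (the set of vertices at distance k−1 from r adjacent to some vertex of S) is not equal to {r}, then the parent set of S is a minimal (r,u)-cutset of G for every vertex u in S. -/

import Mathlib

open SimpleGraph

namespace Paper

variable {V : Type}

/-- `u` and `v` are connected in `G` after deleting the vertex set `B`. -/
def ConnOutside (G : SimpleGraph V) (B : Set V) (u v : V) : Prop :=
  ∃ (hu : u ∈ Bᶜ) (hv : v ∈ Bᶜ), (G.induce Bᶜ).Reachable ⟨u, hu⟩ ⟨v, hv⟩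

/-- `C` is an `(a,b)`-cutset of `G`. -/
def IsSep (G : SimpleGraph V) (a b : V) (C : Set V) : Prop :=
  a ∉ C ∧ b ∉ C ∧ ¬ ConnOutside G C a b

/-- `C` is a minimal `(a,b)`-cutset of `G`. -/
def IsMinSep (G : SimpleGraph V) (a b : V) (C : Set V) : Prop :=
  IsSep G a b C ∧ ∀ C' ⊂ C, ¬ IsSep G a b C'

/-- `S` is a cluster of the layering partition of `G` rooted at `r`, at level `k`:
a maximal set of vertices at distance exactly `k` from `r`, any two of which are
connected in `G` minus the ball of radius `k-1` around `r`. -/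
def IsCluster (G : SimpleGraph V) (r : V) (k : ℕ) (S : Set V) : Prop :=
  S.Nonempty ∧ (∀ v ∈ S, G.dist r v = k) ∧
  (∀ u ∈ S, ∀ v ∈ S, ConnOutside G {w | G.dist r w < k} u v) ∧
  ∀ S', S ⊆ S' → (∀ v ∈ S', G.dist r v = k) →
    (∀ u ∈ S', ∀ v ∈ S', ConnOutside G {w | G.dist r w < k} u v) → S' ⊆ S

/-- The parent set of a cluster `S` at level `k`: vertices at distance `k-1` from `r`
adjacent to some vertex of `S`. -/
def parentSet (G : SimpleGraph V) (r : V) (k : ℕ) (S : Set V) : Set V :=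
  {v | G.dist r v = k - 1 ∧ ∃ u ∈ S, G.Adj v u}

/-- `G` has no `K_{2,3}` induced minor. -/
def K23Free (G : SimpleGraph V) : Prop :=
  ¬ ∃ φ : Fin 2 ⊕ Fin 3 → Set V,
      (∀ w, (φ w).Nonempty) ∧ (∀ w, (G.induce (φ w)).Connected) ∧
      (Pairwise fun a b => Disjoint (φ a) (φ b)) ∧
      (∀ a b, a ≠ b →
        ((completeBipartiteGraph (Fin 2) (Fin 3)).Adj a b ↔
          ∃ u ∈ φ a, ∃ v ∈ φ b, G.Adj u v))

/-- `G` contains a theta as an induced subgraph. -/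
def HasTheta (G : SimpleGraph V) : Prop :=
  ∃ (a b : V) (p₁ p₂ p₃ : G.Walk a b),
    p₁.IsPath ∧ p₂.IsPath ∧ p₃.IsPath ∧
    2 ≤ p₁.length ∧ 2 ≤ p₂.length ∧ 2 ≤ p₃.length ∧
    (∀ v, v ∈ p₁.support → v ∈ p₂.support → v = a ∨ v = b) ∧
    (∀ v, v ∈ p₁.support → v ∈ p₃.support → v = a ∨ v = b) ∧
    (∀ v, v ∈ p₂.support → v ∈ p₃.support → v = a ∨ v = b) ∧
    ∀ u v, u ∈ p₁.support ++ p₂.support ++ p₃.support →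
      v ∈ p₁.support ++ p₂.support ++ p₃.support →
      (G.Adj u v ↔ s(u, v) ∈ p₁.edges ++ p₂.edges ++ p₃.edges)

/-- `G` contains a pyramid as an induced subgraph. -/
def HasPyramid (G : SimpleGraph V) : Prop :=
  ∃ (a b₁ b₂ b₃ : V) (p₁ : G.Walk a b₁) (p₂ : G.Walk a b₂) (p₃ : G.Walk a b₃),
    p₁.IsPath ∧ p₂.IsPath ∧ p₃.IsPath ∧
    G.Adj b₁ b₂ ∧ G.Adj b₂ b₃ ∧ G.Adj b₁ b₃ ∧
    1 ≤ p₁.length ∧ 1 ≤ p₂.length ∧ 1 ≤ p₃.length ∧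
    ((2 ≤ p₁.length ∧ 2 ≤ p₂.length) ∨ (2 ≤ p₁.length ∧ 2 ≤ p₃.length) ∨
      (2 ≤ p₂.length ∧ 2 ≤ p₃.length)) ∧
    (∀ v, v ∈ p₁.support → v ∈ p₂.support → v = a) ∧
    (∀ v, v ∈ p₁.support → v ∈ p₃.support → v = a) ∧
    (∀ v, v ∈ p₂.support → v ∈ p₃.support → v = a) ∧
    ∀ u v, u ∈ p₁.support ++ p₂.support ++ p₃.support →
      v ∈ p₁.support ++ p₂.support ++ p₃.support →
      (G.Adj u v ↔ s(u, v) ∈ p₁.edges ++ p₂.edges ++ p₃.edges ∨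
        s(u, v) ∈ [s(b₁, b₂), s(b₂, b₃), s(b₁, b₃)])

/-- The common part of the definition of an (induced) prism in `G`. -/
def PrismWitness (G : SimpleGraph V) (a₁ a₂ a₃ b₁ b₂ b₃ : V)
    (p₁ : G.Walk a₁ b₁) (p₂ : G.Walk a₂ b₂) (p₃ : G.Walk a₃ b₃) : Prop :=
  p₁.IsPath ∧ p₂.IsPath ∧ p₃.IsPath ∧
  G.Adj a₁ a₂ ∧ G.Adj a₂ a₃ ∧ G.Adj a₁ a₃ ∧
  G.Adj b₁ b₂ ∧ G.Adj b₂ b₃ ∧ G.Adj b₁ b₃ ∧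
  (∀ v, v ∈ p₁.support → v ∉ p₂.support) ∧
  (∀ v, v ∈ p₁.support → v ∉ p₃.support) ∧
  (∀ v, v ∈ p₂.support → v ∉ p₃.support) ∧
  ∀ u v, u ∈ p₁.support ++ p₂.support ++ p₃.support →
    v ∈ p₁.support ++ p₂.support ++ p₃.support →
    (G.Adj u v ↔ s(u, v) ∈ p₁.edges ++ p₂.edges ++ p₃.edges ∨
      s(u, v) ∈ [s(a₁, a₂), s(a₂, a₃), s(a₁, a₃), s(b₁, b₂), s(b₂, b₃), s(b₁, b₃)])

/-- `G` contains a prism as an induced subgraph. -/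
def HasPrism (G : SimpleGraph V) : Prop :=
  ∃ (a₁ a₂ a₃ b₁ b₂ b₃ : V) (p₁ : G.Walk a₁ b₁) (p₂ : G.Walk a₂ b₂) (p₃ : G.Walk a₃ b₃),
    PrismWitness G a₁ a₂ a₃ b₁ b₂ b₃ p₁ p₂ p₃

/-- `G` contains a long prism (at least one path of length ≥ 2) as an induced subgraph. -/
def HasLongPrism (G : SimpleGraph V) : Prop :=
  ∃ (a₁ a₂ a₃ b₁ b₂ b₃ : V) (p₁ : G.Walk a₁ b₁) (p₂ : G.Walk a₂ b₂) (p₃ : G.Walk a₃ b₃),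
    PrismWitness G a₁ a₂ a₃ b₁ b₂ b₃ p₁ p₂ p₃ ∧
    (2 ≤ p₁.length ∨ 2 ≤ p₂.length ∨ 2 ≤ p₃.length)

/-- `c` is an induced cycle (hole when length ≥ 4) of `G`. -/
def IsInducedCycle (G : SimpleGraph V) {v : V} (c : G.Walk v v) : Prop :=
  c.IsCycle ∧ ∀ x ∈ c.support, ∀ y ∈ c.support, (G.Adj x y ↔ s(x, y) ∈ c.edges)

/-- `p` is an induced path of `G`. -/
def IsInducedPath (G : SimpleGraph V) {a b : V} (p : G.Walk a b) : Prop :=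
  p.IsPath ∧ ∀ u ∈ p.support, ∀ v ∈ p.support, (G.Adj u v ↔ s(u, v) ∈ p.edges)

/-- `G` contains a wheel: a hole together with a vertex having ≥ 3 neighbours on it. -/
def HasWheel (G : SimpleGraph V) : Prop :=
  ∃ (v x : V) (c : G.Walk v v), IsInducedCycle G c ∧ 4 ≤ c.length ∧ x ∉ c.support ∧
    ∃ y₁ y₂ y₃, y₁ ≠ y₂ ∧ y₁ ≠ y₃ ∧ y₂ ≠ y₃ ∧
      y₁ ∈ c.support ∧ y₂ ∈ c.support ∧ y₃ ∈ c.support ∧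
      G.Adj x y₁ ∧ G.Adj x y₂ ∧ G.Adj x y₃

/-- A sector of a wheel with rim `c` and centre `x`: a path contained in the rim whose
end-vertices are neighbours of `x` and whose internal vertices are not. -/
def IsSector (G : SimpleGraph V) {v : V} (c : G.Walk v v) (x : V) {s t : V}
    (q : G.Walk s t) : Prop :=
  q.IsPath ∧ (∀ e ∈ q.edges, e ∈ c.edges) ∧ G.Adj x s ∧ G.Adj x t ∧
  ∀ w ∈ q.support, w ≠ s → w ≠ t → ¬ G.Adj x w

/-- `G` contains a broken wheel: a wheel with at least two sectors of length ≥ 2. -/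
def HasBrokenWheel (G : SimpleGraph V) : Prop :=
  ∃ (v x : V) (c : G.Walk v v), IsInducedCycle G c ∧ 4 ≤ c.length ∧ x ∉ c.support ∧
    (∃ y₁ y₂ y₃, y₁ ≠ y₂ ∧ y₁ ≠ y₃ ∧ y₂ ≠ y₃ ∧
      y₁ ∈ c.support ∧ y₂ ∈ c.support ∧ y₃ ∈ c.support ∧
      G.Adj x y₁ ∧ G.Adj x y₂ ∧ G.Adj x y₃) ∧
    ∃ (s₁ t₁ s₂ t₂ : V) (q₁ : G.Walk s₁ t₁) (q₂ : G.Walk s₂ t₂),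
      IsSector G c x q₁ ∧ IsSector G c x q₂ ∧ 2 ≤ q₁.length ∧ 2 ≤ q₂.length ∧
      ∀ w, w ∈ q₁.support → w ∈ q₂.support → G.Adj x w

/-- A universally signable graph: no theta, pyramid, prism, or wheel induced subgraph. -/
def UniversallySignable (G : SimpleGraph V) : Prop :=
  ¬ HasTheta G ∧ ¬ HasPyramid G ∧ ¬ HasPrism G ∧ ¬ HasWheel G

/-- `G` has tree-width at most `w`. -/
def TreewidthLe (G : SimpleGraph V) (w : ℕ) : Prop :=
  ∃ (ι : Type) (T : SimpleGraph ι) (bag : ι → Set V),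
    T.IsTree ∧
    (∀ v, ∃ i, v ∈ bag i) ∧
    (∀ u v, G.Adj u v → ∃ i, u ∈ bag i ∧ v ∈ bag i) ∧
    (∀ v, (T.induce {i | v ∈ bag i}).Connected) ∧
    (∀ i, (bag i).ncard ≤ w + 1)

/-- The strong isometric path complexity of `G` is at most `s`: for every vertex `v`,
every isometric path of `G` can be vertex-covered by at most `s` isometric paths
rooted at `v`. -/
def SipcoLe (G : SimpleGraph V) (s : ℕ) : Prop :=
  ∀ v : V, ∀ ⦃x y : V⦄ (p : G.Walk x y), p.length = G.dist x y →
    ∃ n : ℕ, n ≤ s ∧ ∃ (e : Fin n → V) (Q : ∀ i, G.Walk v (e i)),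
      (∀ i, (Q i).length = G.dist v (e i)) ∧
      ∀ z ∈ p.support, ∃ i, z ∈ (Q i).support

/-- The strong isometric path complexity of `G`. -/
noncomputable def sipco (G : SimpleGraph V) : ℕ := sInf {s | SipcoLe G s}

/-- `P` induces exactly two connected components `C₁`, `C₂` in `G`. -/
def SplitsTwo (G : SimpleGraph V) (P C₁ C₂ : Set V) : Prop :=
  C₁ ∪ C₂ = P ∧ Disjoint C₁ C₂ ∧ C₁.Nonempty ∧ C₂.Nonempty ∧
  (G.induce C₁).Connected ∧ (G.induce C₂).Connected ∧
  ∀ u ∈ C₁, ∀ v ∈ C₂, ¬ G.Adj u v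

/-- The star of edges joining each vertex of `D` to `w`. -/
def starEdges (w : V) (D : Set V) : Set (Sym2 V) := {e | ∃ v ∈ D, e = s(v, w)}

/-- Vertices of `S` with a `G`-neighbour in `C`. -/
def Dset (G : SimpleGraph V) (S C : Set V) : Set V := {u ∈ S | ∃ v ∈ C, G.Adj u v}

/-- Admissible edge sets `E` produced by Algorithm 1 when processing a cluster `S`
with parent set `P`. -/
def ClusterEdges (G : SimpleGraph V) (S P : Set V) (E : Set (Sym2 V)) : Prop :=
  ((G.induce P).Connected ∧ ∃ w ∈ P, E = starEdges w S) ∨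
  ∃ C₁ C₂, SplitsTwo G P C₁ C₂ ∧ ∃ w₁ ∈ C₁, ∃ w₂ ∈ C₂,
    ((Dset G S C₁ ∩ Dset G S C₂ = ∅ ∧
       ((¬ (∃ u ∈ Dset G S C₁, ∃ v ∈ Dset G S C₂, G.Adj u v) ∧
          E = starEdges w₁ (Dset G S C₁) ∪ starEdges w₂ (Dset G S C₂)) ∨
        (∃ u ∈ Dset G S C₁, ∃ v ∈ Dset G S C₂, G.Adj u v ∧
          E = starEdges w₁ (Dset G S C₁) ∪ starEdges w₂ (Dset G S C₂) ∪ {s(u, v)})))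
     ∨
     ((Dset G S C₁ ∩ Dset G S C₂).Nonempty ∧
       ∃ u ∈ Dset G S C₁ ∩ Dset G S C₂,
         E = starEdges w₁ (Dset G S C₁) ∪
             starEdges w₂ (Dset G S C₂ \ Dset G S C₁) ∪ {s(u, w₂)}))

/-- `H` is a possible output of the cluster-rewiring algorithm (Algorithm 1) on `(G, r)`. -/
def IsAlgoOutput (G : SimpleGraph V) (r : V) (H : SimpleGraph V) : Prop :=
  ∃ f : Set V → Set (Sym2 V),
    (∀ S k, 1 ≤ k → IsCluster G r k S → ClusterEdges G S (parentSet G r k S) (f S)) ∧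
    H.edgeSet = ⋃ S ∈ {S : Set V | ∃ k, 1 ≤ k ∧ IsCluster G r k S}, f S

/-- The type of clusters of the layering partition of `G` rooted at `r`. -/
def ClusterType (G : SimpleGraph V) (r : V) : Type := {S : Set V // ∃ k, IsCluster G r k S}

/-- The layering tree: clusters, adjacent when `G` has an edge between them. -/
def layeringTree (G : SimpleGraph V) (r : V) : SimpleGraph (ClusterType G r) :=
  SimpleGraph.fromRel (fun S T => ∃ u ∈ S.1, ∃ v ∈ T.1, G.Adj u v)

/-- `A` is a connected component of `G - C`. -/
def IsCompOf (G : SimpleGraph V) (C A : Set V) : Prop :=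
  A.Nonempty ∧ Disjoint A C ∧ (G.induce A).Connected ∧
  ∀ u ∈ A, ∀ v, v ∉ A → v ∉ C → ¬ G.Adj u v


section Aux
variable {G : SimpleGraph V} {B C : Set V} {u v w : V}

lemma connOutside_refl (h : u ∉ B) : ConnOutside G B u u := ⟨h, h, Reachable.refl _⟩

lemma ConnOutside.symm' (h : ConnOutside G B u v) : ConnOutside G B v u := by
  obtain ⟨hu, hv, hr⟩ := h; exact ⟨hv, hu, hr.symm⟩

lemma ConnOutside.trans' (h1 : ConnOutside G B u v) (h2 : ConnOutside G B v w) :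
    ConnOutside G B u w := by
  obtain ⟨hu, hv, hr⟩ := h1; obtain ⟨hv', hw, hr'⟩ := h2
  exact ⟨hu, hw, hr.trans hr'⟩

lemma connOutside_of_adj (hx : u ∉ B) (hy : v ∉ B) (hadj : G.Adj u v) :
    ConnOutside G B u v :=
  ⟨hx, hy, SimpleGraph.Adj.reachable (by exact hadj)⟩

lemma ConnOutside.mono (hCB : C ⊆ B) (h : ConnOutside G B u v) :
    ConnOutside G C u v := by
  obtain ⟨hu, hv, hr⟩ := h
  have hsub : Bᶜ ⊆ Cᶜ := Set.compl_subset_compl.mpr hCB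
  refine ⟨hsub hu, hsub hv, ?_⟩
  have := hr.map (SimpleGraph.induceHomOfLE G hsub).toHom
  convert this using 2 <;> rfl

end Aux

theorem stmt0 {V : Type} [Fintype V] (G : SimpleGraph V) (hG : G.Connected) (r : V)
    (k : ℕ) (hk : 1 ≤ k) (S : Set V) (hS : IsCluster G r k S)
    (hP : parentSet G r k S ≠ {r}) :
    ∀ u ∈ S, IsMinSep G r u (parentSet G r k S) := by
  obtain ⟨hSne, hdist, hconn, hmax⟩ := hS
  have hdadj : ∀ x y : V, G.Adj x y → G.dist r y ≤ G.dist r x + 1 := by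
    intro x y h
    have h1 : G.dist r y ≤ G.dist r x + G.dist x y := hG.dist_triangle
    have h2 : G.dist x y = 1 := SimpleGraph.dist_eq_one_iff_adj.mpr h
    omega
  -- k ≥ 2
  have hk2 : 2 ≤ k := by
    by_contra h
    have hk1 : k = 1 := by omega
    apply hP
    obtain ⟨u₀, hu₀⟩ := hSne
    ext v
    simp only [parentSet, Set.mem_setOf_eq, Set.mem_singleton_iff, hk1]
    constructor
    · rintro ⟨hv0, -⟩
      exact (hG.dist_eq_zero_iff.mp (by simpa using hv0)).symm
    · rintro rfl
      refine ⟨by simp, u₀, hu₀, ?_⟩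
      exact SimpleGraph.dist_eq_one_iff_adj.mp (by rw [hdist u₀ hu₀, hk1])
  intro u hu
  set P := parentSet G r k S with hPdef
  set B : Set V := {w | G.dist r w < k} with hBdef
  have hru : G.dist r u = k := hdist u hu
  have hrP : r ∉ P := by
    intro h
    have := h.1
    rw [SimpleGraph.dist_self] at this
    omega
  have huP : u ∉ P := by
    intro h
    have := h.1
    rw [hru] at this
    omega
  have huB : u ∉ B := by simp [hBdef, hru]
  -- membership lemma
  have memS : ∀ y : V, G.dist r y = k → ConnOutside G B y u → y ∈ S := by
    intro y hy hcy
    refine hmax (S ∪ {y}) Set.subset_union_left ?_ ?_ (Set.mem_union_right _ rfl)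
    · rintro v (hv | hv)
      · exact hdist v hv
      · rw [Set.mem_singleton_iff] at hv; subst hv; exact hy
    · rintro a (ha | ha) b (hb | hb)
      · exact hconn a ha b hb
      · rw [Set.mem_singleton_iff] at hb; subst hb
        exact (hconn a ha u hu).trans' hcy.symm'
      · rw [Set.mem_singleton_iff] at ha; subst ha
        exact hcy.trans' ((hconn b hb u hu).symm')
      · rw [Set.mem_singleton_iff] at ha hb; subst ha; subst hb
        exact connOutside_refl (by simp [hBdef, hy])
  have huP' : u ∈ Pᶜ := huP
  -- Claim H
  have claimH : ∀ (x y : ↥(Pᶜ)) (p : (G.induce Pᶜ).Walk x y), y.1 = u →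
      ((k ≤ G.dist r x.1 → ConnOutside G B x.1 u) ∧ (G.dist r x.1 < k → False)) := by
    intro x y p
    induction p with
    | nil =>
      intro hyu
      constructor
      · intro _
        rw [hyu]
        exact connOutside_refl huB
      · intro hlt
        rw [hyu, hru] at hlt
        omega
    | @cons a b c hab q ih =>
      intro hyu
      obtain ⟨ihk, ihlt⟩ := ih hyu
      have hadj' : G.Adj a.1 b.1 := hab
      have hbk : k ≤ G.dist r b.1 := by
        by_contra h
        exact ihlt (by omega)
      have hCb : ConnOutside G B b.1 u := ihk hbk
      constructor
      · intro hak
        refine (connOutside_of_adj ?_ ?_ hadj').trans' hCb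
        · simp [hBdef]; omega
        · simp [hBdef]; omega
      · intro halt
        have h1 : G.dist r b.1 ≤ G.dist r a.1 + 1 := hdadj _ _ hadj'
        have hb' : G.dist r b.1 = k := by omega
        have ha' : G.dist r a.1 = k - 1 := by omega
        have hbS : b.1 ∈ S := memS b.1 hb' hCb
        exact a.2 ⟨ha', b.1, hbS, hadj'⟩
  -- separation
  have hsep : IsSep G r u P := by
    refine ⟨hrP, huP, ?_⟩
    rintro ⟨hr', hu'', hreach⟩
    obtain ⟨p⟩ := hreach
    exact (claimH ⟨r, hr'⟩ ⟨u, hu''⟩ p rfl).2 (by rw [SimpleGraph.dist_self]; omega)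
  refine ⟨hsep, ?_⟩
  -- minimality
  rintro C' hC'sub ⟨hrC', huC', hnconn⟩
  apply hnconn
  have hC'P : C' ⊆ P := hC'sub.1
  have hC'dist : ∀ v ∈ C', G.dist r v = k - 1 := fun v hv => (hC'P hv).1
  -- reach r to any vertex of small distance avoiding C'
  have reach_r : ∀ d : ℕ, ∀ x : V, G.dist r x = d → d + 1 ≤ k → x ∉ C' →
      ConnOutside G C' r x := by
    intro d
    induction d with
    | zero =>
      intro x hx _ hxC'
      have : r = x := hG.dist_eq_zero_iff.mp hx
      subst this
      exact connOutside_refl hxC'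
    | succ d ihd =>
      intro x hx hdk hxC'
      have hx0 : G.dist r x ≠ 0 := by omega
      obtain ⟨p, hp⟩ := SimpleGraph.exists_walk_of_dist_ne_zero hx0
      have hne : x ≠ r := by
        intro h; subst h; rw [SimpleGraph.dist_self] at hx; omega
      obtain ⟨y, hxy, q, hq⟩ := SimpleGraph.Walk.exists_eq_cons_of_ne hne p.reverse
      have hqlen : q.length = d := by
        have h1 : p.reverse.length = d + 1 := by
          rw [SimpleGraph.Walk.length_reverse, hp, hx]
        rw [hq] at h1
        simpa using h1
      have hyd : G.dist r y = d := by
        have h1 : G.dist r y ≤ d := by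
          have := SimpleGraph.dist_le q.reverse
          rwa [SimpleGraph.Walk.length_reverse, hqlen] at this
        have h2 : G.dist r x ≤ G.dist r y + 1 := hdadj _ _ hxy.symm
        omega
      have hyC' : y ∉ C' := by
        intro h
        have := hC'dist y h
        omega
      have h1 : ConnOutside G C' r y := ihd y hyd (by omega) hyC'
      exact h1.trans' (connOutside_of_adj hyC' hxC' hxy.symm)
  obtain ⟨x, hxP, hxC'⟩ := Set.exists_of_ssubset hC'sub
  obtain ⟨hxd, s, hsS, hadjxs⟩ := hxP
  have hsC' : s ∉ C' := by
    intro h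
    have := hC'dist s h
    rw [hdist s hsS] at *
    omega
  have h1 : ConnOutside G C' r x := reach_r (k - 1) x hxd (by omega) hxC'
  have h2 : ConnOutside G C' x s := connOutside_of_adj hxC' hsC' hadjxs
  have h3 : ConnOutside G C' s u :=
    (hconn s hsS u hu).mono (fun v hv => by simp [hBdef]; rw [hC'dist v hv]; omega)
  exact h1.trans' (h2.trans' h3)


end Paper
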